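/- For every invertible d×d complex matrix X and every natural number n ≥ 1, there exists a polynomial f with complex coefficients such that S := f(X) satisfies S^n = X. -/

import Mathlib

open Matrix BigOperators Polynomial

/-- Permutation symmetry of an `n`-qudit state represented by its amplitudes. -/
def PSym {n d : ℕ} (ψ : (Fin n → Fin d) → ℂ) : Prop :=
  ∀ σ : Equiv.Perm (Fin n), ∀ x : Fin n → Fin d, ψ (x ∘ σ) = ψ x

/-- The operator `B` acting on the `k`-th tensor factor (identity elsewhere). -/
noncomputable def appAt {n d : ℕ} (k : Fin n) (B : Matrix (Fin d) (Fin d) ℂ)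
    (ψ : (Fin n → Fin d) → ℂ) : (Fin n → Fin d) → ℂ :=
  fun x => ∑ j : Fin d, B (x k) j * ψ (Function.update x k j)

/-- The operator `A 1 ⊗ A 2 ⊗ ⋯ ⊗ A n` acting on an `n`-qudit state. -/
noncomputable def appAll {n d : ℕ} (A : Fin n → Matrix (Fin d) (Fin d) ℂ)
    (ψ : (Fin n → Fin d) → ℂ) : (Fin n → Fin d) → ℂ :=
  fun x => ∑ y : Fin n → Fin d, (∏ k, A k (x k) (y k)) * ψ y

private lemma binom_aux {R : Type*} [CommRing R] (x y : R) (m : ℕ) :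
    ∃ z : R, (x + y) ^ (m + 1) = x ^ (m + 1) + (m + 1) * x ^ m * y + y ^ 2 * z := by
  induction m with
  | zero => exact ⟨0, by ring⟩
  | succ m ih =>
    obtain ⟨z, hz⟩ := ih
    refine ⟨x * z + (m + 1) * x ^ m + y * z, ?_⟩
    have h : (x + y) ^ (m + 1 + 1) = (x + y) ^ (m + 1) * (x + y) := by ring
    rw [h, hz]; push_cast; ring

private lemma local_root (n : ℕ) (hn : 1 ≤ n) (lam mu : ℂ) (hmu : mu ≠ 0)
    (hmun : mu ^ n = lam) (k : ℕ) :
    ∃ f : ℂ[X], (X - C lam) ^ k ∣ f ^ n - X ∧ f.eval lam = mu := by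
  induction k with
  | zero => exact ⟨C mu, by simp, by simp⟩
  | succ k ih =>
    obtain ⟨f, ⟨r, hr⟩, hev⟩ := ih
    rcases Nat.eq_zero_or_pos k with hk | hk
    · subst hk
      refine ⟨C mu, ?_, by simp⟩
      rw [pow_one, ← map_pow, hmun, dvd_iff_isRoot]
      simp [IsRoot]
    · obtain ⟨m, rfl⟩ : ∃ m, n = m + 1 := ⟨n - 1, by omega⟩
      set q : ℂ[X] := X - C lam with hq
      set c : ℂ := r.eval lam / ((m + 1) * mu ^ m) with hc
      obtain ⟨z, hz⟩ := binom_aux f (-(C c * q ^ k)) m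
      have hqg : q ∣ (r - (m + 1 : ℂ[X]) * f ^ m * C c + q ^ k * (C c ^ 2 * z)) := by
        rw [dvd_iff_isRoot]
        have hqe : q.eval lam = 0 := by simp [hq]
        have hmu1 : ((m : ℂ) + 1) * mu ^ m ≠ 0 :=
          mul_ne_zero (Nat.cast_add_one_ne_zero m) (pow_ne_zero _ hmu)
        simp only [IsRoot, eval_add, eval_sub, eval_mul, eval_pow, hqe, eval_natCast,
          eval_one, eval_C, hev, zero_pow hk.ne', zero_mul, add_zero]
        rw [hc]
        field_simp
        ring
      obtain ⟨g', hg'⟩ := hqg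
      refine ⟨f - C c * q ^ k, ⟨g', ?_⟩, ?_⟩
      · have h1 : f - C c * q ^ k = f + -(C c * q ^ k) := by ring
        rw [h1, hz, pow_succ]
        linear_combination hr + q ^ k * hg'
      · simp [hev, hq, zero_pow hk.ne']

private lemma crt_aux {R : Type*} [CommRing R] {ι : Type*} [DecidableEq ι] (s : Finset ι)
    (q g : ι → R) (h : (s : Set ι).Pairwise (Function.onFun IsCoprime q)) :
    ∃ f : R, ∀ i ∈ s, q i ∣ f - g i := by
  classical
  induction s using Finset.induction_on with
  | empty => exact ⟨0, by simp⟩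
  | @insert a t ha ih =>
    obtain ⟨f, hf⟩ := ih (h.mono (by simp [Set.subset_insert]))
    have hcop : IsCoprime (q a) (∏ i ∈ t, q i) := by
      apply IsCoprime.prod_right
      intro i hi
      exact h (by simp) (by simp [hi]) (fun he => ha (he ▸ hi))
    obtain ⟨u, v, huv⟩ := hcop
    refine ⟨g a * (v * ∏ i ∈ t, q i) + f * (u * q a), ?_⟩
    intro i hi
    rcases Finset.mem_insert.mp hi with rfl | hit
    · have key : g i * (v * ∏ j ∈ t, q j) + f * (u * q i) - g i = (f - g i) * u * q i := by
        linear_combination (g i) * huv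
      rw [key]
      exact ⟨(f - g i) * u, by ring⟩
    · have key : g a * (v * ∏ j ∈ t, q j) + f * (u * q a) - g i
          = (g a - f) * v * (∏ j ∈ t, q j) + (f - g i) := by
        linear_combination f * huv
      rw [key]
      exact dvd_add (Dvd.dvd.mul_left (Finset.dvd_prod_of_mem q hit) _) (hf i hit)


theorem stmt_6 {d : ℕ} (X : Matrix (Fin d) (Fin d) ℂ) (hX : IsUnit X.det)
    (n : ℕ) (hn : 1 ≤ n) :
    ∃ f : Polynomial ℂ, (Polynomial.aeval X f) ^ n = X := by
  classical
  set p := X.charpoly with hp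
  have hmonic : p.Monic := X.charpoly_monic
  have hcoeff : p.coeff 0 ≠ 0 := by
    intro h
    rw [Matrix.det_eq_sign_charpoly_coeff, ← hp, h, mul_zero] at hX
    exact not_isUnit_zero hX
  have hroots0 : ∀ lam ∈ p.roots.toFinset, lam ≠ 0 := by
    intro lam hl h0
    have hroot := Polynomial.isRoot_of_mem_roots (Multiset.mem_toFinset.mp hl)
    rw [h0, Polynomial.IsRoot, ← Polynomial.coeff_zero_eq_eval_zero] at hroot
    exact hcoeff hroot
  -- local n-th roots at each eigenvalue
  have hloc : ∀ lam : ℂ, ∃ f : ℂ[X], lam ∈ p.roots.toFinset →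
      (Polynomial.X - Polynomial.C lam) ^ (p.roots.count lam) ∣ f ^ n - Polynomial.X := by
    intro lam
    by_cases hl : lam ∈ p.roots.toFinset
    · obtain ⟨mu, hmu⟩ := IsAlgClosed.exists_pow_nat_eq lam (show 0 < n by omega)
      have hmu0 : mu ≠ 0 := by
        intro h
        exact hroots0 lam hl (by rw [← hmu, h, zero_pow (by omega : n ≠ 0)])
      obtain ⟨f, hf, -⟩ := local_root n hn lam mu hmu0 hmu (p.roots.count lam)
      exact ⟨f, fun _ => hf⟩
    · exact ⟨0, fun h => absurd h hl⟩
  choose F hF using hloc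
  set q : ℂ → ℂ[X] := fun lam => (Polynomial.X - Polynomial.C lam) ^ (p.roots.count lam)
    with hqdef
  have hpair : (↑p.roots.toFinset : Set ℂ).Pairwise (Function.onFun IsCoprime q) := by
    intro a _ b _ hab
    exact (Polynomial.pairwise_coprime_X_sub_C (Function.injective_id) hab).pow
  obtain ⟨f, hf⟩ := crt_aux p.roots.toFinset q F hpair
  have hdvd : ∀ lam ∈ p.roots.toFinset, q lam ∣ f ^ n - Polynomial.X := by
    intro lam hl
    have h1 : q lam ∣ f ^ n - (F lam) ^ n :=
      (hf lam hl).trans (sub_dvd_pow_sub_pow f (F lam) n)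
    have h2 : q lam ∣ (F lam) ^ n - Polynomial.X := hF lam hl
    simpa using dvd_add h1 h2
  have hprod : (∏ lam ∈ p.roots.toFinset, q lam) ∣ f ^ n - Polynomial.X :=
    Finset.prod_dvd_of_coprime hpair hdvd
  have hcard : Multiset.card p.roots = p.natDegree :=
    (Polynomial.splits_iff_card_roots).mp (IsAlgClosed.splits p)
  have hpeq : p = ∏ lam ∈ p.roots.toFinset, q lam := by
    conv_lhs => rw [← Polynomial.prod_multiset_X_sub_C_of_monic_of_roots_card_eq hmonic hcard]
    rw [Finset.prod_multiset_map_count]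
  rw [← hpeq] at hprod
  obtain ⟨g, hg⟩ := hprod
  refine ⟨f, ?_⟩
  have := congrArg (Polynomial.aeval X) hg
  rw [_root_.map_mul, hp, Matrix.aeval_self_charpoly, zero_mul] at this
  simp only [map_sub, map_pow, Polynomial.aeval_X] at this
  exact sub_eq_zero.mp this
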